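/- Let v be a grid function with v_{0,j} = v_{M_x,j} = 0 for all 0 ≤ j ≤ M_y. Then (2/3)‖v‖ ≤ ‖H_x v‖ ≤ ‖v‖ and (2/3)‖v‖² ≤ (H_x v, v) ≤ ‖v‖². -/

import Mathlib

open Finset

noncomputable section

/-- A grid function on the `(M_x+1) × (M_y+1)` grid, represented as a total function
(only the values at indices `0 ≤ i ≤ M_x`, `0 ≤ j ≤ M_y` are relevant). -/
abbrev GridFn : Type := ℕ → ℕ → ℝ

/-- Spatial stepsize `h_x = 1/M_x`. -/
def hx (Mx : ℕ) : ℝ := ((Mx : ℝ))⁻¹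

/-- Spatial stepsize `h_y = 1/M_y`. -/
def hy (My : ℕ) : ℝ := ((My : ℝ))⁻¹

/-- Second-order difference in the x-direction:
`δ_x² v_{i,j} = (v_{i+1,j} − 2v_{i,j} + v_{i−1,j})/h_x²` (used for `1 ≤ i ≤ M_x−1`). -/
def dxx (Mx : ℕ) (v : GridFn) : GridFn := fun i j =>
  (v (i + 1) j - 2 * v i j + v (i - 1) j) / (hx Mx) ^ 2

/-- Second-order difference in the y-direction. -/
def dyy (My : ℕ) (v : GridFn) : GridFn := fun i j =>
  (v i (j + 1) - 2 * v i j + v i (j - 1)) / (hy My) ^ 2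

/-- Compact operator `H_x`: `H_x v_{i,j} = v_{i,j} + (h_x²/12) δ_x² v_{i,j}` for
`1 ≤ i ≤ M_x−1`, and `H_x v_{i,j} = v_{i,j}` for `i ∈ {0, M_x}`. -/
def Hcx (Mx : ℕ) (v : GridFn) : GridFn := fun i j =>
  if 1 ≤ i ∧ i ≤ Mx - 1 then v i j + (hx Mx) ^ 2 / 12 * dxx Mx v i j else v i j

/-- Compact operator `H_y`. -/
def Hcy (My : ℕ) (v : GridFn) : GridFn := fun i j =>
  if 1 ≤ j ∧ j ≤ My - 1 then v i j + (hy My) ^ 2 / 12 * dyy My v i j else v i j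

/-- Compact operator `H_h = H_x H_y`. -/
def Hch (Mx My : ℕ) (v : GridFn) : GridFn := Hcx Mx (Hcy My v)

/-- `Λ_h v = H_y(δ_x² v) + H_x(δ_y² v)` (at interior indices). -/
def Lamh (Mx My : ℕ) (v : GridFn) : GridFn := fun i j =>
  Hcy My (dxx Mx v) i j + Hcx Mx (dyy My v) i j

/-- Discrete L² inner product
`(v,w) = h_x h_y Σ_{i=1}^{M_x−1} Σ_{j=1}^{M_y−1} v_{i,j} w_{i,j}`. -/
def innp (Mx My : ℕ) (v w : GridFn) : ℝ :=
  hx Mx * hy My * ∑ i ∈ Icc 1 (Mx - 1), ∑ j ∈ Icc 1 (My - 1), v i j * w i j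

/-- Discrete L² norm `‖v‖ = (v,v)^{1/2}`. -/
def nrm (Mx My : ℕ) (v : GridFn) : ℝ := Real.sqrt (innp Mx My v v)

/-- Discrete maximum norm `‖v‖_∞ = max_{1≤i≤M_x−1, 1≤j≤M_y−1} |v_{i,j}|`. -/
def nrmInf (Mx My : ℕ) (v : GridFn) : ℝ :=
  ((Icc 1 (Mx - 1)) ×ˢ (Icc 1 (My - 1))).fold max 0 fun p => |v p.1 p.2|

/-- `‖δ_x v‖_x² = h_x h_y Σ_{i=1}^{M_x} Σ_{j=1}^{M_y−1} (δ_x v_{i−1/2,j})²`. -/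
def nrmX2 (Mx My : ℕ) (v : GridFn) : ℝ :=
  hx Mx * hy My * ∑ i ∈ Icc 1 Mx, ∑ j ∈ Icc 1 (My - 1),
    ((v i j - v (i - 1) j) / hx Mx) ^ 2

/-- `‖δ_y v‖_y² = h_x h_y Σ_{i=1}^{M_x−1} Σ_{j=1}^{M_y} (δ_y v_{i,j−1/2})²`. -/
def nrmY2 (Mx My : ℕ) (v : GridFn) : ℝ :=
  hx Mx * hy My * ∑ i ∈ Icc 1 (Mx - 1), ∑ j ∈ Icc 1 My,
    ((v i j - v i (j - 1)) / hy My) ^ 2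

/-- Membership in `V_h^0`: a grid function vanishing on the boundary of the grid. -/
def BZero (Mx My : ℕ) (v : GridFn) : Prop :=
  ∀ i ≤ Mx, ∀ j ≤ My, (i = 0 ∨ i = Mx ∨ j = 0 ∨ j = My) → v i j = 0

/-- Interior grid indices: `1 ≤ i ≤ M_x−1`, `1 ≤ j ≤ M_y−1`. -/
def interiorIdx (Mx My i j : ℕ) : Prop :=
  1 ≤ i ∧ i ≤ Mx - 1 ∧ 1 ≤ j ∧ j ≤ My - 1

/-- Time average `w̄^{n−1/2} = (w^n + w^{n−1})/2` of a sequence of grid functions. -/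
def tbar (u : ℕ → GridFn) (n : ℕ) : GridFn := fun i j => (u n i j + u (n - 1) i j) / 2

/-- Time difference `δ_t w^{n−1/2} = (w^n − w^{n−1})/τ` of a sequence of grid functions. -/
def tdiff (τ : ℝ) (u : ℕ → GridFn) (n : ℕ) : GridFn := fun i j =>
  (u n i j - u (n - 1) i j) / τ

/-- Extrapolation `l^{*,1} = l⁰`, `l^{*,n} = (3 l^{n−1} − l^{n−2})/2` for `n ≥ 2`. -/
def extrap (u : ℕ → GridFn) (n : ℕ) : GridFn :=
  if n = 1 then u 0 else fun i j => (3 * u (n - 1) i j - u (n - 2) i j) / 2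

private lemma abel_id (w : ℕ → ℝ) (m : ℕ) :
    ∑ i ∈ range m, (2 * w (i+1) - w (i+2) - w i) * w (i+1)
      = ∑ i ∈ range m, (w (i+1) - w i)^2 + (w 1 - w 0) * w 0 - (w (m+1) - w m) * w m := by
  induction m with
  | zero => simp
  | succ m ih => rw [sum_range_succ, sum_range_succ, ih]; ring

private lemma oneD1 (w : ℕ → ℝ) (n : ℕ) (h0 : w 0 = 0) (hn : w (n+1) = 0) :
    ∑ i ∈ range n, (2 * w (i+1) - w (i+2) - w i) * w (i+1)
      = ∑ i ∈ range (n+1), (w (i+1) - w i)^2 := by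
  rw [abel_id, h0, sum_range_succ, hn]; ring

private lemma oneD2 (w : ℕ → ℝ) (n : ℕ) :
    ∑ i ∈ range n, (2 * w (i+1) - w (i+2) - w i)^2
      ≤ 4 * ∑ i ∈ range (n+1), (w (i+1) - w i)^2 := by
  have h1 : ∑ i ∈ range n, (2 * w (i+1) - w (i+2) - w i)^2
      ≤ ∑ i ∈ range n, (2*(w (i+1) - w i)^2 + 2*(w (i+2) - w (i+1))^2) :=
    sum_le_sum fun i _ => by nlinarith [sq_nonneg ((w (i+1) - w i) + (w (i+2) - w (i+1)))]
  have h2 : ∑ i ∈ range n, (w (i+1) - w i)^2 ≤ ∑ i ∈ range (n+1), (w (i+1) - w i)^2 := by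
    rw [sum_range_succ]; nlinarith [sq_nonneg (w (n+1) - w n)]
  have h3 : ∑ i ∈ range n, (w (i+2) - w (i+1))^2 ≤ ∑ i ∈ range (n+1), (w (i+1) - w i)^2 := by
    rw [sum_range_succ']; nlinarith [sq_nonneg (w 1 - w 0)]
  calc ∑ i ∈ range n, (2 * w (i+1) - w (i+2) - w i)^2
      ≤ ∑ i ∈ range n, (2*(w (i+1) - w i)^2 + 2*(w (i+2) - w (i+1))^2) := h1
    _ = 2 * ∑ i ∈ range n, (w (i+1) - w i)^2 + 2 * ∑ i ∈ range n, (w (i+2) - w (i+1))^2 := by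
        rw [sum_add_distrib, mul_sum, mul_sum]
    _ ≤ 4 * ∑ i ∈ range (n+1), (w (i+1) - w i)^2 := by linarith

private lemma oneD3 (w : ℕ → ℝ) (n : ℕ) (h0 : w 0 = 0) (hn : w (n+1) = 0) :
    ∑ i ∈ range (n+1), (w (i+1) - w i)^2 ≤ 4 * ∑ i ∈ range n, w (i+1)^2 := by
  have h1 : ∑ i ∈ range (n+1), (w (i+1) - w i)^2
      ≤ ∑ i ∈ range (n+1), (2 * w (i+1)^2 + 2 * w i ^2) :=
    sum_le_sum fun i _ => by nlinarith [sq_nonneg (w (i+1) + w i)]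
  have h2 : ∑ i ∈ range (n+1), w (i+1)^2 = ∑ i ∈ range n, w (i+1)^2 := by
    rw [sum_range_succ, hn]; simp
  have h3 : ∑ i ∈ range (n+1), w i ^2 = ∑ i ∈ range n, w (i+1)^2 := by
    rw [sum_range_succ', h0]; simp
  calc ∑ i ∈ range (n+1), (w (i+1) - w i)^2
      ≤ ∑ i ∈ range (n+1), (2 * w (i+1)^2 + 2 * w i ^2) := h1
    _ = 2 * ∑ i ∈ range (n+1), w (i+1)^2 + 2 * ∑ i ∈ range (n+1), w i ^2 := by
        rw [sum_add_distrib, mul_sum, mul_sum]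
    _ = 4 * ∑ i ∈ range n, w (i+1)^2 := by rw [h2, h3]; ring

/-- per-column facts -/
private lemma perCol (w : ℕ → ℝ) (n : ℕ) (h0 : w 0 = 0) (hn : w (n+1) = 0) :
    (2/3 * ∑ i ∈ range n, w (i+1) * w (i+1)
        ≤ ∑ i ∈ range n, (w (i+1) + (w (i+2) - 2 * w (i+1) + w i)/12) * w (i+1))
    ∧ (∑ i ∈ range n, (w (i+1) + (w (i+2) - 2 * w (i+1) + w i)/12) * w (i+1)
        ≤ ∑ i ∈ range n, w (i+1) * w (i+1))
    ∧ (∑ i ∈ range n, (w (i+1) + (w (i+2) - 2 * w (i+1) + w i)/12)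
          * (w (i+1) + (w (i+2) - 2 * w (i+1) + w i)/12)
        ≤ ∑ i ∈ range n, w (i+1) * w (i+1)) := by
  have hSnn : (0:ℝ) ≤ ∑ i ∈ range n, w (i+1) * w (i+1) :=
    sum_nonneg fun i _ => mul_self_nonneg _
  have hDnn : (0:ℝ) ≤ ∑ i ∈ range (n+1), (w (i+1) - w i)^2 :=
    sum_nonneg fun i _ => sq_nonneg _
  have hEnn : (0:ℝ) ≤ ∑ i ∈ range n, (2 * w (i+1) - w (i+2) - w i)^2 :=
    sum_nonneg fun i _ => sq_nonneg _
  have h1 := oneD1 w n h0 hn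
  have h2 := oneD2 w n
  have h3 := oneD3 w n h0 hn
  have hS2 : ∑ i ∈ range n, w (i+1)^2 = ∑ i ∈ range n, w (i+1) * w (i+1) :=
    sum_congr rfl fun i _ => by ring
  rw [hS2] at h3
  have hP : ∑ i ∈ range n, (w (i+1) + (w (i+2) - 2 * w (i+1) + w i)/12) * w (i+1)
      = (∑ i ∈ range n, w (i+1) * w (i+1))
        - (∑ i ∈ range n, (2 * w (i+1) - w (i+2) - w i) * w (i+1))/12 := by
    rw [sum_div, ← sum_sub_distrib]
    exact sum_congr rfl fun i _ => by ring
  have hQ : ∑ i ∈ range n, (w (i+1) + (w (i+2) - 2 * w (i+1) + w i)/12)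
          * (w (i+1) + (w (i+2) - 2 * w (i+1) + w i)/12)
      = (∑ i ∈ range n, w (i+1) * w (i+1))
        - (∑ i ∈ range n, (2 * w (i+1) - w (i+2) - w i) * w (i+1))/6
        + (∑ i ∈ range n, (2 * w (i+1) - w (i+2) - w i)^2)/144 := by
    rw [sum_div, sum_div, ← sum_sub_distrib, ← sum_add_distrib]
    exact sum_congr rfl fun i _ => by ring
  rw [h1] at hP hQ
  rw [hP, hQ]
  refine ⟨by linarith, by linarith, by linarith⟩


theorem stmt5 (Mx My : ℕ) (hMx : 2 ≤ Mx) (hMy : 2 ≤ My) (v : GridFn)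
    (hb : ∀ j ≤ My, v 0 j = 0 ∧ v Mx j = 0) :
    (2 / 3 * nrm Mx My v ≤ nrm Mx My (Hcx Mx v) ∧ nrm Mx My (Hcx Mx v) ≤ nrm Mx My v)
    ∧ (2 / 3 * innp Mx My v v ≤ innp Mx My (Hcx Mx v) v
        ∧ innp Mx My (Hcx Mx v) v ≤ innp Mx My v v) := by
  have hMxR : (0:ℝ) < (Mx:ℝ) := by
    have : 0 < Mx := by omega
    exact_mod_cast this
  have hMyR : (0:ℝ) < (My:ℝ) := by
    have : 0 < My := by omega
    exact_mod_cast this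
  have hhx : (0:ℝ) < hx Mx := by rw [hx]; positivity
  have hhy : (0:ℝ) < hy My := by rw [hy]; positivity
  have hcpos : (0:ℝ) < hx Mx * hy My := mul_pos hhx hhy
  -- simplification of Hcx at interior indices
  have hHcx : ∀ i, 1 ≤ i → i ≤ Mx - 1 → ∀ j : ℕ,
      Hcx Mx v i j = v i j + (v (i+1) j - 2 * v i j + v (i-1) j)/12 := by
    intro i hi1 hi2 j
    rw [Hcx, if_pos ⟨hi1, hi2⟩, dxx]
    have h0 : hx Mx ≠ 0 := ne_of_gt hhx
    field_simp
  -- conversion of Icc sums to range sums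
  have conv : ∀ (n : ℕ) (f : ℕ → ℝ), ∑ i ∈ Icc 1 n, f i = ∑ i ∈ range n, f (i+1) := by
    intro n f
    rw [← Finset.Ico_add_one_right_eq_Icc, sum_Ico_eq_sum_range]
    exact sum_congr rfl fun i _ => by rw [Nat.add_comm]
  -- per-column key facts
  have key : ∀ j ∈ Icc 1 (My-1),
      (2/3 * ∑ i ∈ Icc 1 (Mx-1), v i j * v i j
          ≤ ∑ i ∈ Icc 1 (Mx-1), Hcx Mx v i j * v i j)
      ∧ (∑ i ∈ Icc 1 (Mx-1), Hcx Mx v i j * v i j ≤ ∑ i ∈ Icc 1 (Mx-1), v i j * v i j)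
      ∧ (∑ i ∈ Icc 1 (Mx-1), Hcx Mx v i j * Hcx Mx v i j
          ≤ ∑ i ∈ Icc 1 (Mx-1), v i j * v i j) := by
    intro j hj
    rw [mem_Icc] at hj
    have hjMy : j ≤ My := le_trans hj.2 (Nat.sub_le _ _)
    obtain ⟨n, hn⟩ : ∃ n, Mx = n + 1 := ⟨Mx - 1, by omega⟩
    have hMxn : Mx - 1 = n := by omega
    have h0 : v 0 j = 0 := (hb j hjMy).1
    have hnn : v (n+1) j = 0 := by rw [← hn]; exact (hb j hjMy).2
    have hcol := perCol (fun i => v i j) n h0 hnn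
    have hH : ∀ i ∈ range n, Hcx Mx v (i+1) j
        = v (i+1) j + (v (i+2) j - 2 * v (i+1) j + v i j)/12 := by
      intro i hi
      rw [mem_range] at hi
      have := hHcx (i+1) (by omega) (by omega) j
      exact this
    rw [hMxn, conv n, conv n, conv n]
    refine ⟨?_, ?_, ?_⟩
    · have := hcol.1
      calc 2/3 * ∑ i ∈ range n, v (i+1) j * v (i+1) j
          ≤ ∑ i ∈ range n, (v (i+1) j + (v (i+2) j - 2 * v (i+1) j + v i j)/12) * v (i+1) j :=
            hcol.1
        _ = ∑ i ∈ range n, Hcx Mx v (i+1) j * v (i+1) j :=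
            (sum_congr rfl fun i hi => by rw [hH i hi]).symm
    · calc ∑ i ∈ range n, Hcx Mx v (i+1) j * v (i+1) j
          = ∑ i ∈ range n, (v (i+1) j + (v (i+2) j - 2 * v (i+1) j + v i j)/12) * v (i+1) j :=
            sum_congr rfl fun i hi => by rw [hH i hi]
        _ ≤ ∑ i ∈ range n, v (i+1) j * v (i+1) j := hcol.2.1
    · calc ∑ i ∈ range n, Hcx Mx v (i+1) j * Hcx Mx v (i+1) j
          = ∑ i ∈ range n, (v (i+1) j + (v (i+2) j - 2 * v (i+1) j + v i j)/12)
              * (v (i+1) j + (v (i+2) j - 2 * v (i+1) j + v i j)/12) :=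
            sum_congr rfl fun i hi => by rw [hH i hi]
        _ ≤ ∑ i ∈ range n, v (i+1) j * v (i+1) j := hcol.2.2
  -- reorganize inner products
  have E0 : innp Mx My v v
      = hx Mx * hy My * ∑ j ∈ Icc 1 (My-1), ∑ i ∈ Icc 1 (Mx-1), v i j * v i j := by
    rw [innp, sum_comm]
  have E1 : innp Mx My (Hcx Mx v) v
      = hx Mx * hy My * ∑ j ∈ Icc 1 (My-1), ∑ i ∈ Icc 1 (Mx-1), Hcx Mx v i j * v i j := by
    rw [innp, sum_comm]
  have E2 : innp Mx My (Hcx Mx v) (Hcx Mx v)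
      = hx Mx * hy My * ∑ j ∈ Icc 1 (My-1), ∑ i ∈ Icc 1 (Mx-1),
          Hcx Mx v i j * Hcx Mx v i j := by
    rw [innp, sum_comm]
  have I1 : 2/3 * innp Mx My v v ≤ innp Mx My (Hcx Mx v) v := by
    rw [E0, E1]
    have h := sum_le_sum fun j hj => (key j hj).1
    rw [← mul_sum] at h
    calc 2/3 * (hx Mx * hy My * ∑ j ∈ Icc 1 (My-1), ∑ i ∈ Icc 1 (Mx-1), v i j * v i j)
        = hx Mx * hy My * (2/3 * ∑ j ∈ Icc 1 (My-1), ∑ i ∈ Icc 1 (Mx-1), v i j * v i j) := by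
          ring
      _ ≤ _ := mul_le_mul_of_nonneg_left h hcpos.le
  have I2 : innp Mx My (Hcx Mx v) v ≤ innp Mx My v v := by
    rw [E0, E1]
    exact mul_le_mul_of_nonneg_left (sum_le_sum fun j hj => (key j hj).2.1) hcpos.le
  have I3 : innp Mx My (Hcx Mx v) (Hcx Mx v) ≤ innp Mx My v v := by
    rw [E0, E2]
    exact mul_le_mul_of_nonneg_left (sum_le_sum fun j hj => (key j hj).2.2) hcpos.le
  have hvv : 0 ≤ innp Mx My v v := by
    rw [innp]
    exact mul_nonneg hcpos.le
      (sum_nonneg fun _ _ => sum_nonneg fun _ _ => mul_self_nonneg _)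
  -- Cauchy–Schwarz
  have CS : innp Mx My (Hcx Mx v) v ^ 2
      ≤ innp Mx My (Hcx Mx v) (Hcx Mx v) * innp Mx My v v := by
    rw [innp, innp, innp]
    have hcs := sum_mul_sq_le_sq_mul_sq ((Icc 1 (Mx-1)) ×ˢ (Icc 1 (My-1)))
      (fun p => Hcx Mx v p.1 p.2) (fun p => v p.1 p.2)
    rw [sum_product (f := fun p => Hcx Mx v p.1 p.2 * v p.1 p.2),
        sum_product (f := fun p => Hcx Mx v p.1 p.2 ^ 2),
        sum_product (f := fun p => v p.1 p.2 ^ 2)] at hcs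
    have e2 : ∑ i ∈ Icc 1 (Mx-1), ∑ j ∈ Icc 1 (My-1), Hcx Mx v i j ^ 2
        = ∑ i ∈ Icc 1 (Mx-1), ∑ j ∈ Icc 1 (My-1), Hcx Mx v i j * Hcx Mx v i j :=
      sum_congr rfl fun i _ => sum_congr rfl fun j _ => sq (Hcx Mx v i j) ▸ by ring
    have e3 : ∑ i ∈ Icc 1 (Mx-1), ∑ j ∈ Icc 1 (My-1), v i j ^ 2
        = ∑ i ∈ Icc 1 (Mx-1), ∑ j ∈ Icc 1 (My-1), v i j * v i j :=
      sum_congr rfl fun i _ => sum_congr rfl fun j _ => by ring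
    rw [e2, e3] at hcs
    calc (hx Mx * hy My * ∑ i ∈ Icc 1 (Mx-1), ∑ j ∈ Icc 1 (My-1), Hcx Mx v i j * v i j) ^ 2
        = (hx Mx * hy My)^2
            * (∑ i ∈ Icc 1 (Mx-1), ∑ j ∈ Icc 1 (My-1), Hcx Mx v i j * v i j) ^ 2 := by ring
      _ ≤ (hx Mx * hy My)^2
            * ((∑ i ∈ Icc 1 (Mx-1), ∑ j ∈ Icc 1 (My-1), Hcx Mx v i j * Hcx Mx v i j)
              * ∑ i ∈ Icc 1 (Mx-1), ∑ j ∈ Icc 1 (My-1), v i j * v i j) :=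
          mul_le_mul_of_nonneg_left hcs (sq_nonneg _)
      _ = _ := by ring
  -- norm bounds
  have N2 : nrm Mx My (Hcx Mx v) ≤ nrm Mx My v := by
    rw [nrm, nrm]
    exact Real.sqrt_le_sqrt I3
  have N1 : 2/3 * nrm Mx My v ≤ nrm Mx My (Hcx Mx v) := by
    rcases eq_or_lt_of_le hvv with h | h
    · rw [nrm, ← h, Real.sqrt_zero, mul_zero]
      exact Real.sqrt_nonneg _
    · have hsq : (2/3 * innp Mx My v v)^2 ≤ innp Mx My (Hcx Mx v) v ^ 2 :=
        pow_le_pow_left₀ (by positivity) I1 2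
      have h49 : 4/9 * innp Mx My v v ≤ innp Mx My (Hcx Mx v) (Hcx Mx v) := by
        refine le_of_mul_le_mul_right ?_ h
        nlinarith [hsq, CS]
      calc 2/3 * nrm Mx My v = Real.sqrt ((2/3)^2 * innp Mx My v v) := by
            rw [nrm, Real.sqrt_mul (by norm_num), Real.sqrt_sq (by norm_num)]
        _ ≤ Real.sqrt (innp Mx My (Hcx Mx v) (Hcx Mx v)) := by
            apply Real.sqrt_le_sqrt
            calc (2/3:ℝ)^2 * innp Mx My v v = 4/9 * innp Mx My v v := by ring
              _ ≤ _ := h49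
        _ = nrm Mx My (Hcx Mx v) := rfl
  exact ⟨⟨N1, N2⟩, ⟨I1, I2⟩⟩
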